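/- Mean value inequality: let φ : ℝ → ℝ ∪ {+∞} be lower semicontinuous on [a,c] with φ(a) finite, and let μ ∈ ℝ with μ ≤ φ(c) − φ(a). Then there exists x₀ ∈ [a,c) such that μ ≤ (c − a)·D₊φ(x₀). -/

import Mathlib

open Filter Set Topology MeasureTheory

/-- Lower right Dini derivative of an extended-real-valued function
(set to `⊥` where the function takes the value `⊤`). -/
noncomputable def DlowE (φ : ℝ → EReal) (t : ℝ) : EReal :=
  if φ t = ⊤ then ⊥ else
    Filter.liminf (fun s : ℝ => (φ (t + s) - φ t) * (((s⁻¹ : ℝ)) : EReal))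
      (nhdsWithin 0 (Set.Ioi 0))

/-- Lower right Dini derivative of a real-valued function. -/
noncomputable def DlowR (φ : ℝ → ℝ) (t : ℝ) : EReal :=
  Filter.liminf (fun s : ℝ => (((φ (t + s) - φ t) / s : ℝ) : EReal))
    (nhdsWithin 0 (Set.Ioi 0))

/-- Upper right Dini derivative of a real-valued function. -/
noncomputable def DupR (φ : ℝ → ℝ) (t : ℝ) : EReal :=
  Filter.limsup (fun s : ℝ => (((φ (t + s) - φ t) / s : ℝ) : EReal))
    (nhdsWithin 0 (Set.Ioi 0))

/-- Chain/growth lemma: if the lower right Dini derivative is `< lam` on `[a,c)`,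
then `φ y ≤ φ x + lam (y - x)` for `a ≤ x ≤ y ≤ c`. -/
lemma chainAux (φ : ℝ → EReal) (a c lam : ℝ)
    (hbot : ∀ t, φ t ≠ ⊥)
    (hlsc : LowerSemicontinuousOn φ (Set.Icc a c))
    (hD : ∀ x ∈ Set.Ico a c, φ x ≠ ⊤ →
      Filter.liminf (fun s : ℝ => (φ (x + s) - φ x) * (((s⁻¹ : ℝ)) : EReal))
        (nhdsWithin 0 (Set.Ioi 0)) < (lam : EReal))
    {x y : ℝ} (hax : a ≤ x) (hxy : x ≤ y) (hyc : y ≤ c) :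
    φ y ≤ φ x + ((lam * (y - x) : ℝ) : EReal) := by
  by_cases hx : φ x = ⊤
  · rw [hx, EReal.top_add_coe]; exact le_top
  set p : ℝ := (φ x).toReal with hp
  have hpx : φ x = (p : EReal) := (EReal.coe_toReal hx (hbot x)).symm
  set A : Set ℝ := {z | z ∈ Set.Icc x y ∧ φ z ≤ ((p + lam * (z - x) : ℝ) : EReal)} with hA
  have hxA : x ∈ A := ⟨⟨le_refl x, hxy⟩, by rw [hpx]; norm_num⟩
  have hAne : A.Nonempty := ⟨x, hxA⟩
  have hAbdd : BddAbove A := ⟨y, fun z hz => hz.1.2⟩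
  have hAsub : A ⊆ Set.Icc a c := fun z hz =>
    ⟨hax.trans hz.1.1, hz.1.2.trans hyc⟩
  set b := sSup A with hbdef
  have hxb : x ≤ b := le_csSup hAbdd hxA
  have hby : b ≤ y := csSup_le hAne (fun z hz => hz.1.2)
  have hbIcc : b ∈ Set.Icc a c := ⟨hax.trans hxb, hby.trans hyc⟩
  have hne : (nhdsWithin b A).NeBot :=
    mem_closure_iff_nhdsWithin_neBot.1 (csSup_mem_closure hAne hAbdd)
  -- b ∈ A
  have hbA : φ b ≤ ((p + lam * (b - x) : ℝ) : EReal) := by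
    by_contra hcon
    push_neg at hcon
    obtain ⟨w, hw1, hw2⟩ := exists_between hcon
    have hwtop : w ≠ ⊤ := fun h => by rw [h] at hw2; exact not_top_lt hw2
    have hwbot : w ≠ ⊥ := fun h => by rw [h] at hw1; exact not_lt_bot hw1
    set q : ℝ := w.toReal with hq
    have hwq : w = (q : EReal) := (EReal.coe_toReal hwtop hwbot).symm
    have hq1 : p + lam * (b - x) < q := by
      rw [hwq] at hw1; exact_mod_cast hw1
    have hlsb := hlsc b hbIcc w hw2
    have h1 : ∀ᶠ z in nhdsWithin b A, w < φ z :=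
      (nhdsWithin_mono b hAsub) hlsb
    have h2 : ∀ᶠ z in nhdsWithin b A, z ∈ A := self_mem_nhdsWithin
    have h3 : ∀ᶠ z in nhdsWithin b A, p + lam * (z - x) < q := by
      apply nhdsWithin_le_nhds
      apply Filter.Tendsto.eventually_lt_const hq1
      exact (Continuous.tendsto (by fun_prop) b)
    obtain ⟨z, hz1, hz2, hz3⟩ := (h1.and (h2.and h3)).exists
    have : φ z ≤ ((p + lam * (z - x) : ℝ) : EReal) := hz2.2
    have : φ z < w := lt_of_le_of_lt this (by rw [hwq]; exact_mod_cast hz3)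
    exact absurd hz1 (not_lt_of_gt this)
  rcases eq_or_lt_of_le hby with hbey | hblt
  · rw [hpx, ← EReal.coe_add, ← hbey]; exact hbA
  -- b < y : contradiction with b = sSup A
  · exfalso
    have hbtop : φ b ≠ ⊤ := fun h => by
      rw [h] at hbA; exact (EReal.coe_ne_top _) (top_le_iff.1 hbA)
    have hbIco : b ∈ Set.Ico a c := ⟨hbIcc.1, lt_of_lt_of_le hblt hyc⟩
    have hlim := hD b hbIco hbtop
    have freq := Filter.frequently_lt_of_liminf_lt (by isBoundedDefault) hlim
    have ev1 : ∀ᶠ s in nhdsWithin (0:ℝ) (Set.Ioi 0), s < y - b := by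
      apply eventually_nhdsWithin_of_eventually_nhds
      exact gt_mem_nhds (by linarith)
    have ev2 : ∀ᶠ s in nhdsWithin (0:ℝ) (Set.Ioi 0), s ∈ Set.Ioi (0:ℝ) :=
      self_mem_nhdsWithin
    obtain ⟨s, hquot, hs1, hs2⟩ := (freq.and_eventually (ev1.and ev2)).exists
    have hs0 : (0:ℝ) < s := hs2
    set qb : ℝ := (φ b).toReal with hqbd
    have hqb : φ b = (qb : EReal) := (EReal.coe_toReal hbtop (hbot b)).symm
    have hbstop : φ (b + s) ≠ ⊤ := by
      intro h
      rw [h, hqb, EReal.top_sub_coe, EReal.top_mul_coe_of_pos (inv_pos.2 hs0)] at hquot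
      exact (not_top_lt) hquot
    set u : ℝ := (φ (b + s)).toReal with hud
    have hu : φ (b + s) = (u : EReal) := (EReal.coe_toReal hbstop (hbot _)).symm
    rw [hu, hqb, ← EReal.coe_sub, ← EReal.coe_mul, EReal.coe_lt_coe_iff] at hquot
    have hus : u < qb + lam * s := by
      rw [← div_eq_mul_inv] at hquot
      have := (div_lt_iff₀ hs0).1 hquot
      linarith
    have hqbr : qb ≤ p + lam * (b - x) := by
      rw [hqb] at hbA; exact_mod_cast hbA
    have hbsA : b + s ∈ A := by
      refine ⟨⟨by linarith, by linarith⟩, ?_⟩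
      rw [hu, EReal.coe_le_coe_iff]
      nlinarith
    have := le_csSup hAbdd hbsA
    rw [← hbdef] at this
    linarith

/-- Mean value inequality: if `φ` is lsc on `[a,c]` with `φ(a)` finite and
`μ ≤ φ(c) - φ(a)`, then there is `x₀ ∈ [a,c)` with `μ ≤ (c-a)·D₊φ(x₀)`. -/
theorem stmt3 (φ : ℝ → EReal) (a c μ : ℝ) (hac : a < c)
    (hbot : ∀ t, φ t ≠ ⊥)
    (hlsc : LowerSemicontinuousOn φ (Set.Icc a c))
    (ha : φ a ≠ ⊤)
    (hμ : (μ : EReal) ≤ φ c - φ a) :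
    ∃ x₀ ∈ Set.Ico a c, (μ : EReal) ≤ ((c - a : ℝ) : EReal) * DlowE φ x₀ := by
  by_contra hcon
  push_neg at hcon
  have hca : (0:ℝ) < c - a := by linarith
  set lam : ℝ := μ / (c - a) with hlam
  have hlammu : lam * (c - a) = μ := div_mul_cancel₀ μ (ne_of_gt hca)
  -- pointwise Dini bound
  have hD : ∀ x ∈ Set.Ico a c, φ x ≠ ⊤ →
      Filter.liminf (fun s : ℝ => (φ (x + s) - φ x) * (((s⁻¹ : ℝ)) : EReal))
        (nhdsWithin 0 (Set.Ioi 0)) < (lam : EReal) := by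
    intro x hx hxtop
    have h1 := hcon x hx
    rw [DlowE, if_neg hxtop] at h1
    set D := Filter.liminf (fun s : ℝ => (φ (x + s) - φ x) * (((s⁻¹ : ℝ)) : EReal))
        (nhdsWithin 0 (Set.Ioi 0)) with hDdef
    clear_value D
    induction D using EReal.rec with
    | bot => exact bot_lt_iff_ne_bot.2 (EReal.coe_ne_bot _)
    | coe d =>
      rw [← EReal.coe_mul, EReal.coe_lt_coe_iff] at h1
      rw [EReal.coe_lt_coe_iff, hlam, lt_div_iff₀ hca]
      linarith [h1]
    | top =>
      rw [EReal.coe_mul_top_of_pos (by exact_mod_cast hca)] at h1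
      exact absurd h1 not_top_lt
  have chain : ∀ x z : ℝ, a ≤ x → x ≤ z → z ≤ c →
      φ z ≤ φ x + ((lam * (z - x) : ℝ) : EReal) := fun x z h1 h2 h3 =>
    chainAux φ a c lam hbot hlsc hD h1 h2 h3
  set p : ℝ := (φ a).toReal with hpd
  have hpa : φ a = (p : EReal) := (EReal.coe_toReal ha (hbot a)).symm
  -- φ c ≤ p + μ
  have hc1 : φ c ≤ ((p + μ : ℝ) : EReal) := by
    have := chain a c (le_refl a) (le_of_lt hac) (le_refl c)
    rw [hpa, ← EReal.coe_add, hlammu] at this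
    exact this
  have hctop : φ c ≠ ⊤ := fun h => by
    rw [h] at hc1; exact (EReal.coe_ne_top _) (top_le_iff.1 hc1)
  set q : ℝ := (φ c).toReal with hqd
  have hqc : φ c = (q : EReal) := (EReal.coe_toReal hctop (hbot c)).symm
  have hμ' : μ ≤ q - p := by
    rw [hqc, hpa, ← EReal.coe_sub, EReal.coe_le_coe_iff] at hμ
    exact hμ
  have hq1 : q ≤ p + μ := by rw [hqc, EReal.coe_le_coe_iff] at hc1; exact hc1
  have hqeq : q = p + μ := le_antisymm hq1 (by linarith)
  -- φ is affine on [a, c]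
  have haff : ∀ z ∈ Set.Icc a c, φ z = ((p + lam * (z - a) : ℝ) : EReal) := by
    intro z hz
    have hup : φ z ≤ ((p + lam * (z - a) : ℝ) : EReal) := by
      have := chain a z (le_refl a) hz.1 hz.2
      rwa [hpa, ← EReal.coe_add] at this
    have hztop : φ z ≠ ⊤ := fun h => by
      rw [h] at hup; exact (EReal.coe_ne_top _) (top_le_iff.1 hup)
    set v : ℝ := (φ z).toReal with hvd
    have hv : φ z = (v : EReal) := (EReal.coe_toReal hztop (hbot z)).symm
    have hlow := chain z c hz.1 hz.2 (le_refl c)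
    rw [hqc, hv, ← EReal.coe_add, EReal.coe_le_coe_iff] at hlow
    have hvle : v ≤ p + lam * (z - a) := by
      rw [hv, EReal.coe_le_coe_iff] at hup; exact hup
    have : v = p + lam * (z - a) := by nlinarith [hqeq, hlammu]
    rw [hv, this]
  -- compute the Dini derivative at a : it equals lam
  have hevent : ∀ᶠ s in nhdsWithin (0:ℝ) (Set.Ioi 0),
      (φ (a + s) - φ a) * (((s⁻¹ : ℝ)) : EReal) = (lam : EReal) := by
    have ev1 : ∀ᶠ s in nhdsWithin (0:ℝ) (Set.Ioi 0), s < c - a := by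
      apply eventually_nhdsWithin_of_eventually_nhds
      exact gt_mem_nhds (by linarith)
    have ev2 : ∀ᶠ s in nhdsWithin (0:ℝ) (Set.Ioi 0), s ∈ Set.Ioi (0:ℝ) :=
      self_mem_nhdsWithin
    filter_upwards [ev1, ev2] with s hs1 hs2
    have hs0 : (0:ℝ) < s := hs2
    have hmem : a + s ∈ Set.Icc a c := ⟨by linarith, by linarith⟩
    rw [haff (a + s) hmem, hpa, ← EReal.coe_sub, ← EReal.coe_mul]
    congr 1
    field_simp
    ring
  have hliminf : Filter.liminf (fun s : ℝ => (φ (a + s) - φ a) * (((s⁻¹ : ℝ)) : EReal))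
      (nhdsWithin 0 (Set.Ioi 0)) = (lam : EReal) := by
    rw [Filter.liminf_congr hevent]
    exact Filter.liminf_const _
  have := hD a ⟨le_refl a, hac⟩ ha
  rw [hliminf] at this
  exact lt_irrefl _ this
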